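/- No-error structure of POVM elements: let V be an n-dimensional complex inner product space, φ_1,…,φ_n a basis of V, and for each i let φ̃_i be the unique vector with ⟨φ̃_i, φ_j⟩ = δ_ij for all j (the reciprocal/dual family). Fix an index i₀ and let E : V → V be a positive semidefinite selfadjoint operator with ⟨φ_j, E φ_j⟩ = 0 for all j ≠ i₀. Then there exists a real number x ≥ 0 such that E is the rank-one operator E v = x ⟨φ̃_{i₀}, v⟩ φ̃_{i₀} for all v ∈ V. -/

import Mathlib

open ComplexOrder

/-- No-error structure of POVM elements: if `E` is a positive semidefinite
selfadjoint operator with `⟨φ j, E φ j⟩ = 0` for all `j ≠ i₀`, where `φ` is a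
basis with reciprocal family `φt` (`⟨φt i, φ j⟩ = δ_ij`), then `E` is a
nonnegative multiple of the rank-one projector onto `φt i₀`:
`E v = x ⟨φt i₀, v⟩ φt i₀` for some real `x ≥ 0`. -/
theorem no_error_povm_element_rank_one
    {V : Type*} [NormedAddCommGroup V] [InnerProductSpace ℂ V]
    [FiniteDimensional ℂ V]
    (n : ℕ) (φ : Module.Basis (Fin n) ℂ V)
    (φt : Fin n → V)
    (hrecip : ∀ i j, (inner ℂ (φt i) (φ j) : ℂ) = if i = j then 1 else 0)
    (i₀ : Fin n)
    (E : V →ₗ[ℂ] V) (hE : E.IsSymmetric)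
    (hEpos : ∀ v : V, 0 ≤ (inner ℂ v (E v) : ℂ).re)
    (hNoErr : ∀ j, j ≠ i₀ → (inner ℂ (φ j) (E (φ j)) : ℂ) = 0) :
    ∃ x : ℝ, 0 ≤ x ∧ ∀ v : V, E v = ((x : ℂ) * inner ℂ (φt i₀) v) • φt i₀ := by
  -- Step 1: `E (φ j) = 0` for `j ≠ i₀`.
  have hker : ∀ j, j ≠ i₀ → E (φ j) = 0 := by
    intro j hj
    set w := E (φ j) with hw
    set a : ℝ := ‖w‖ ^ 2 with ha
    set b : ℝ := (inner ℂ w (E w) : ℂ).re with hb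
    have hb0 : 0 ≤ b := hEpos w
    have h1 : (inner ℂ (φ j) (E w) : ℂ) = (a : ℂ) := by
      rw [← hE (φ j) w, ← hw, inner_self_eq_norm_sq_to_K, ha]
      norm_cast
    have h2 : (inner ℂ w (E (φ j)) : ℂ) = (a : ℂ) := by
      rw [← hw, inner_self_eq_norm_sq_to_K, ha]
      norm_cast
    have key : ∀ t : ℝ, 0 ≤ 2 * t * a + t ^ 2 * b := by
      intro t
      have h := hEpos (φ j + (t : ℂ) • w)
      have hexp : (inner ℂ (φ j + (t : ℂ) • w) (E (φ j + (t : ℂ) • w)) : ℂ)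
          = (t : ℂ) * a + (t : ℂ) * a + (t : ℂ) ^ 2 * (inner ℂ w (E w) : ℂ) := by
        simp only [map_add, map_smul, inner_add_left, inner_add_right,
          inner_smul_left, inner_smul_right, hNoErr j hj, h1, h2, Complex.conj_ofReal]
        ring
      rw [hexp] at h
      simp only [Complex.add_re, Complex.mul_re, Complex.ofReal_re, Complex.ofReal_im,
        ← Complex.ofReal_pow] at h
      nlinarith [h]
    have ha0 : 0 ≤ a := by positivity
    have haz : a = 0 := by
      have h := key (-(a / (b + 1)))
      have hb1 : (0 : ℝ) < b + 1 := by linarith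
      have hne : b + 1 ≠ 0 := ne_of_gt hb1
      have heq : (b + 1) ^ 2 * (2 * -(a / (b + 1)) * a + (-(a / (b + 1))) ^ 2 * b)
          = -(a ^ 2 * b) - 2 * a ^ 2 := by
        field_simp
        ring
      have h'' : (0 : ℝ) ≤ -(a ^ 2 * b) - 2 * a ^ 2 := by
        rw [← heq]
        exact mul_nonneg (sq_nonneg _) h
      have hsq : a ^ 2 = 0 := by nlinarith [mul_nonneg (sq_nonneg a) hb0]
      exact pow_eq_zero_iff two_ne_zero |>.mp hsq
    have : ‖w‖ = 0 := by
      have := haz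
      rw [ha] at this
      nlinarith [norm_nonneg w]
    simpa [hw] using norm_eq_zero.mp this
  -- the diagonal value
  set c : ℂ := inner ℂ (φ i₀) (E (φ i₀)) with hc
  have hcreal : (starRingEnd ℂ) c = c := by
    rw [hc, ← hE (φ i₀) (φ i₀)]
    exact hE.conj_inner_sym (φ i₀) (φ i₀)
  have hcim : c.im = 0 := by
    have := congrArg Complex.im hcreal
    simp [Complex.conj_im] at this
    linarith
  have hcre : (0 : ℝ) ≤ c.re := hEpos (φ i₀)
  have hcval : c = ((c.re : ℝ) : ℂ) := by
    exact Complex.ext rfl (by simp [hcim])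
  -- Step 2: `E (φ i₀) = c • φt i₀`.
  have hEi : E (φ i₀) = c • φt i₀ := by
    apply InnerProductSpace.ext_inner_left_basis φ
    intro j
    rw [inner_smul_right]
    have hsym := hE (φ j) (φ i₀)
    by_cases hji : j = i₀
    · subst hji
      have : (inner ℂ (φ j) (φt j) : ℂ) = 1 := by
        rw [← inner_conj_symm, hrecip j j]
        simp
      rw [this, mul_one, ← hc]
    · have h0 : (inner ℂ (φ j) (E (φ i₀)) : ℂ) = 0 := by
        rw [← hsym, hker j hji]
        simp
      have h1 : (inner ℂ (φ j) (φt i₀) : ℂ) = 0 := by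
        rw [← inner_conj_symm, hrecip i₀ j]
        simp [Ne.symm hji]
      rw [h0, h1, mul_zero]
  refine ⟨c.re, hcre, ?_⟩
  -- Step 3: compare the two linear maps on the basis.
  have hmaps : E = LinearMap.smulRight
      ((innerSL ℂ (φt i₀)).toLinearMap) (E (φ i₀)) := by
    apply φ.ext
    intro j
    by_cases hji : j = i₀
    · subst hji
      simp [hrecip]
    · simp [hker j hji, hrecip, hji, Ne.symm hji]
  intro v
  have : E v = (inner ℂ (φt i₀) v : ℂ) • E (φ i₀) := by
    conv_lhs => rw [hmaps]
    rfl
  rw [this, hEi, smul_smul, mul_comm, ← hcval]
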